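/- Suppose p = 2, so I = I_1 ∪ I_2. Then for every λ_1, λ_2 > 0, lim_{t→∞} t · (1 − P(M(I_1) ≤ 1 − λ_1/t, M(I_2) ≤ 1 − λ_2/t)) = ε(λ_1^{-1}, λ_2^{-1}). -/

import Mathlib

open MeasureTheory ProbabilityTheory Real Filter Topology
open scoped ProbabilityTheory

noncomputable section

/-- Marginal Fréchet-type distribution function `F_i(t) = exp(-σ t^(-1/η))` for `t > 0`. -/
def margF (σ η t : ℝ) : ℝ := if 0 < t then Real.exp (-σ * t ^ (-1 / η)) else 0

/-- Joint distribution function of the random vector `X`. -/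
def jointF {Ω : Type*} [MeasureSpace Ω] {d : ℕ} (X : Fin d → Ω → ℝ) (t : Fin d → ℝ) : ℝ :=
  (ℙ {ω | ∀ i, X i ω ≤ t i}).toReal

/-- Exponent function `ℓ(t) = -ln F_X(t)`. -/
def expo {Ω : Type*} [MeasureSpace Ω] {d : ℕ} (X : Fin d → Ω → ℝ) (t : Fin d → ℝ) : ℝ :=
  -Real.log (jointF X t)

/-- Block maximum `M(I_j) = max_{i ∈ I_j} F_i(X_i)`, where `I_j = {i | B i = j}`. -/
def blockMax {Ω : Type*} [MeasureSpace Ω] {d p : ℕ} (B : Fin d → Fin p) (σ : Fin d → ℝ)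
    (η : ℝ) (X : Fin d → Ω → ℝ) (j : Fin p) (ω : Ω) : ℝ :=
  sSup ((fun i => margF (σ i) η (X i ω)) '' {i | B i = j})

/-- Extremal dependence function
`ε(λ₁,…,λ_p) = E(max_j M(I_j)^(λ_j)) / (1 - E(max_j M(I_j)^(λ_j)))`. -/
def epsFun {Ω : Type*} [MeasureSpace Ω] {d p : ℕ} (B : Fin d → Fin p) (σ : Fin d → ℝ)
    (η : ℝ) (X : Fin d → Ω → ℝ) (l : Fin p → ℝ) : ℝ :=
  (∫ ω, ⨆ j, blockMax B σ η X j ω ^ l j ∂ℙ) /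
    (1 - ∫ ω, ⨆ j, blockMax B σ η X j ω ^ l j ∂ℙ)

/-- Single-block extremal dependence function `ε_{I_j}(λ)`. -/
def epsBlock {Ω : Type*} [MeasureSpace Ω] {d p : ℕ} (B : Fin d → Fin p) (σ : Fin d → ℝ)
    (η : ℝ) (X : Fin d → Ω → ℝ) (j : Fin p) (l : ℝ) : ℝ :=
  (∫ ω, blockMax B σ η X j ω ^ l ∂ℙ) / (1 - ∫ ω, blockMax B σ η X j ω ^ l ∂ℙ)

/-! ### Auxiliary lemmas -/

lemma fin2_cases (j : Fin 2) : j = 0 ∨ j = 1 := by omega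

lemma margF_nonneg (σ η t : ℝ) : 0 ≤ margF σ η t := by
  unfold margF; split_ifs
  · exact (Real.exp_pos _).le
  · exact le_refl 0

lemma margF_le_one {σ η : ℝ} (hσ : 0 < σ) (t : ℝ) : margF σ η t ≤ 1 := by
  unfold margF; split_ifs with h
  · rw [Real.exp_le_one_iff]
    have : 0 < t ^ (-1 / η) := Real.rpow_pos_of_pos h _
    nlinarith
  · exact zero_le_one

lemma margF_le_iff {σ η : ℝ} (hσ : 0 < σ) (hη : 0 < η) {u : ℝ} (hu0 : 0 < u) (hu1 : u < 1)
    (x : ℝ) : margF σ η x ≤ u ↔ x ≤ (σ / (-Real.log u)) ^ η := by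
  have hm : 0 < -Real.log u := by
    have := Real.log_neg hu0 hu1; linarith
  have hr : 0 < (σ / (-Real.log u)) ^ η := Real.rpow_pos_of_pos (div_pos hσ hm) _
  unfold margF; split_ifs with h
  · rw [← Real.le_log_iff_exp_le hu0]
    have h1 : (-σ * x ^ (-1 / η) ≤ Real.log u) ↔ ((-Real.log u) / σ ≤ x ^ (-1 / η)) := by
      rw [div_le_iff₀ hσ]; constructor <;> intro <;> nlinarith
    rw [h1]
    have he : (-1 / η : ℝ) = (-η)⁻¹ := by field_simp
    rw [he, Real.le_rpow_inv_iff_of_neg (div_pos hm hσ) h (by linarith)]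
    rw [Real.rpow_neg (div_pos hm hσ).le, ← Real.inv_rpow (div_pos hm hσ).le, inv_div]
  · push_neg at h
    exact iff_of_true (le_of_lt hu0) (le_trans h hr.le)

lemma measurable_margF (σ η : ℝ) : Measurable (margF σ η) := by
  have : margF σ η
      = fun t => if 0 < t then Real.exp (-σ * Real.exp (Real.log t * (-1 / η))) else 0 := by
    funext t
    unfold margF
    split_ifs with h
    · rw [Real.rpow_def_of_pos h]
    · rfl
  rw [this]
  apply Measurable.ite
  · exact measurableSet_lt measurable_const measurable_id
  · exact (((Real.measurable_log.mul_const _).exp.const_mul _).exp)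
  · exact measurable_const

lemma iSup_fin_two (f : Fin 2 → ℝ) : (⨆ j, f j) = max (f 0) (f 1) := by
  apply le_antisymm
  · refine ciSup_le fun j => ?_
    rcases fin2_cases j with h | h <;> subst h
    · exact le_max_left _ _
    · exact le_max_right _ _
  · exact max_le (le_ciSup (Set.finite_range f).bddAbove 0)
      (le_ciSup (Set.finite_range f).bddAbove 1)

section BlockMax

variable {Ω : Type*} [MeasureSpace Ω] {d p : ℕ} (B : Fin d → Fin p) (σ : Fin d → ℝ) (η : ℝ)
  (X : Fin d → Ω → ℝ) (j : Fin p)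

lemma blockMax_le_iff (hne : ∃ i, B i = j) (ω : Ω) (u : ℝ) :
    blockMax B σ η X j ω ≤ u ↔ ∀ i, B i = j → margF (σ i) η (X i ω) ≤ u := by
  obtain ⟨i0, hi0⟩ := hne
  unfold blockMax
  rw [csSup_le_iff ((Set.toFinite _).image _).bddAbove ⟨_, ⟨i0, hi0, rfl⟩⟩]
  constructor
  · intro h i hi; exact h _ ⟨i, hi, rfl⟩
  · rintro h x ⟨i, hi, rfl⟩; exact h i hi

lemma blockMax_nonneg (hne : ∃ i, B i = j) (ω : Ω) : 0 ≤ blockMax B σ η X j ω := by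
  obtain ⟨i0, hi0⟩ := hne
  exact le_trans (margF_nonneg (σ i0) η (X i0 ω))
    (le_csSup ((Set.toFinite _).image _).bddAbove ⟨i0, hi0, rfl⟩)

lemma blockMax_le_one (hσ : ∀ i, 0 < σ i) (hne : ∃ i, B i = j) (ω : Ω) :
    blockMax B σ η X j ω ≤ 1 :=
  (blockMax_le_iff B σ η X j hne ω 1).mpr fun i _ => margF_le_one (hσ i) _

lemma measurable_blockMax (hX : ∀ i, Measurable (X i)) (hne : ∃ i, B i = j) :
    Measurable (blockMax B σ η X j) := by
  obtain ⟨i0, hi0⟩ := hne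
  have hT : (Finset.univ.filter (fun i => B i = j)).Nonempty := ⟨i0, by simp [hi0]⟩
  have heq : blockMax B σ η X j = fun ω =>
      (Finset.univ.filter (fun i => B i = j)).sup' hT (fun i => margF (σ i) η (X i ω)) := by
    funext ω
    rw [Finset.sup'_eq_csSup_image]
    unfold blockMax
    congr 1
    ext x
    simp [Set.mem_image]
  rw [heq]
  have h2 := Finset.measurable_sup' hT fun i (_ : i ∈ Finset.univ.filter (fun i => B i = j)) =>
    (measurable_margF (σ i) η).comp (hX i)
  have h3 : ((Finset.univ.filter (fun i => B i = j)).sup' hT fun i => margF (σ i) η ∘ X i)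
      = fun ω => (Finset.univ.filter (fun i => B i = j)).sup' hT fun i => margF (σ i) η (X i ω) := by
    funext ω
    exact Finset.sup'_apply hT _ ω
  rwa [h3] at h2

end BlockMax

theorem statement9
    {Ω : Type*} [MeasureSpace Ω] [IsProbabilityMeasure (ℙ : Measure Ω)]
    {d : ℕ} (hd : 0 < d)
    (X : Fin d → Ω → ℝ) (hX : ∀ i, Measurable (X i))
    (σ : Fin d → ℝ) (hσ : ∀ i, 0 < σ i)
    (η : ℝ) (hη0 : 0 < η) (hη1 : η ≤ 1)
    (hmarg : ∀ i, ∀ t : ℝ, 0 < t →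
      ℙ {ω | X i ω ≤ t} = ENNReal.ofReal (Real.exp (-σ i * t ^ (-1 / η))))
    (hpos : ∀ t : Fin d → ℝ, (∀ i, 0 < t i) → 0 < jointF X t)
    (hhom : ∀ c : ℝ, 0 < c → ∀ t : Fin d → ℝ, (∀ i, 0 < t i) →
      expo X (fun i => c * t i) = c ^ (-1 / η) * expo X t)
    (B : Fin d → Fin 2) (hB : Function.Surjective B)
    (l1 l2 : ℝ) (hl1 : 0 < l1) (hl2 : 0 < l2) :
    Tendsto (fun t : ℝ => t * (1 - (ℙ {ω | blockMax B σ η X 0 ω ≤ 1 - l1 / t ∧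
        blockMax B σ η X 1 ω ≤ 1 - l2 / t}).toReal)) atTop
      (𝓝 (epsFun B σ η X ![l1⁻¹, l2⁻¹])) := by
  classical
  -- basic data
  set lv : Fin 2 → ℝ := ![l1, l2] with hlv_def
  have hlv : ∀ j, 0 < lv j := by
    intro j; rcases fin2_cases j with h | h <;> subst h <;> simp [lv] <;> assumption
  set a : Fin d → ℝ := fun i => (σ i / lv (B i)) ^ η with ha_def
  have ha : ∀ i, 0 < a i := fun i => Real.rpow_pos_of_pos (div_pos (hσ i) (hlv (B i))) _
  set L : ℝ := expo X a with hL_def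
  -- positivity of L
  have hL0 : 0 < L := by
    have hi0 : Fin d := ⟨0, hd⟩
    have hsub : {ω | ∀ i, X i ω ≤ a i} ⊆ {ω | X hi0 ω ≤ a hi0} := fun ω hω => hω hi0
    have hm := measure_mono (μ := (ℙ : Measure Ω)) hsub
    rw [hmarg hi0 (a hi0) (ha hi0)] at hm
    have h1 : jointF X a ≤ Real.exp (-σ hi0 * (a hi0) ^ (-1/η)) := by
      have := ENNReal.toReal_mono ENNReal.ofReal_ne_top hm
      rwa [ENNReal.toReal_ofReal (Real.exp_pos _).le] at this
    have h2 : jointF X a < 1 := by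
      refine lt_of_le_of_lt h1 ?_
      have hp : 0 < (a hi0) ^ (-1/η) := Real.rpow_pos_of_pos (ha hi0) _
      have : -σ hi0 * (a hi0) ^ (-1/η) < 0 := by nlinarith [hσ hi0]
      calc Real.exp (-σ hi0 * (a hi0) ^ (-1/η)) < Real.exp 0 := Real.exp_lt_exp.mpr this
        _ = 1 := Real.exp_zero
    have hlog := Real.log_neg (hpos a ha) h2
    simp only [hL_def, expo]
    linarith
  -- monotonicity of expo (antitone)
  have hmono : ∀ s t : Fin d → ℝ, (∀ i, 0 < s i) → (∀ i, s i ≤ t i) → expo X t ≤ expo X s := by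
    intro s t hs hst
    have hsub : {ω | ∀ i, X i ω ≤ s i} ⊆ {ω | ∀ i, X i ω ≤ t i} :=
      fun ω hω i => (hω i).trans (hst i)
    have h1 : jointF X s ≤ jointF X t :=
      ENNReal.toReal_mono (measure_ne_top _ _) (measure_mono hsub)
    simp only [expo]
    exact neg_le_neg (Real.log_le_log (hpos s hs) h1)
  -- scaling
  have hηne : η ≠ 0 := hη0.ne'
  have hscale : ∀ r : ℝ, 0 < r → expo X (fun i => r ^ η * a i) = r⁻¹ * L := by
    intro r hr
    have h := hhom (r ^ η) (Real.rpow_pos_of_pos hr η) a ha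
    rwa [← Real.rpow_mul hr.le, show η * (-1/η) = -1 by field_simp, Real.rpow_neg_one] at h
  -- jointF as exponential
  have hjf : ∀ t : Fin d → ℝ, (∀ i, 0 < t i) → jointF X t = Real.exp (-(expo X t)) := by
    intro t ht
    simp only [expo, neg_neg, Real.exp_log (hpos t ht)]
  -- probability of the joint block event
  have hprob : ∀ u : Fin 2 → ℝ, (∀ j, 0 < u j) → (∀ j, u j < 1) →
      (ℙ {ω | blockMax B σ η X 0 ω ≤ u 0 ∧ blockMax B σ η X 1 ω ≤ u 1}).toReal
        = jointF X (fun i => (σ i / (-Real.log (u (B i)))) ^ η) := by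
    intro u hu0 hu1
    have hset : {ω | blockMax B σ η X 0 ω ≤ u 0 ∧ blockMax B σ η X 1 ω ≤ u 1}
        = {ω | ∀ i, X i ω ≤ (σ i / (-Real.log (u (B i)))) ^ η} := by
      ext ω
      simp only [Set.mem_setOf_eq]
      rw [blockMax_le_iff B σ η X 0 (hB 0) ω, blockMax_le_iff B σ η X 1 (hB 1) ω]
      constructor
      · rintro ⟨h0, h1⟩ i
        rcases fin2_cases (B i) with h | h
        · have hh := h0 i h
          rw [margF_le_iff (hσ i) hη0 (hu0 0) (hu1 0)] at hh
          rw [h]; exact hh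
        · have hh := h1 i h
          rw [margF_le_iff (hσ i) hη0 (hu0 1) (hu1 1)] at hh
          rw [h]; exact hh
      · intro h
        constructor
        · intro i hi
          rw [margF_le_iff (hσ i) hη0 (hu0 0) (hu1 0)]
          have hh := h i; rwa [hi] at hh
        · intro i hi
          rw [margF_le_iff (hσ i) hη0 (hu0 1) (hu1 1)]
          have hh := h i; rwa [hi] at hh
    rw [hset]
    rfl
  -- the integral defining epsFun equals L/(L+1), hence epsFun = L
  have heps : epsFun B σ η X ![l1⁻¹, l2⁻¹] = L := by
    set V : Ω → ℝ := fun ω =>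
      max (blockMax B σ η X 0 ω ^ l1⁻¹) (blockMax B σ η X 1 ω ^ l2⁻¹) with hV_def
    have hVsup : (fun ω => ⨆ j, blockMax B σ η X j ω ^ (![l1⁻¹, l2⁻¹] j)) = V := by
      funext ω
      rw [iSup_fin_two]
      simp [V]
    have hVmeas : Measurable V := by
      have m0 := (Real.continuous_rpow_const (le_of_lt (inv_pos.mpr hl1))).measurable.comp
        (measurable_blockMax B σ η X 0 hX (hB 0))
      have m1 := (Real.continuous_rpow_const (le_of_lt (inv_pos.mpr hl2))).measurable.comp
        (measurable_blockMax B σ η X 1 hX (hB 1))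
      exact m0.max m1
    have hV0 : ∀ ω, 0 ≤ V ω := fun ω =>
      le_trans (Real.rpow_nonneg (blockMax_nonneg B σ η X 0 (hB 0) ω) _) (le_max_left _ _)
    have hV1 : ∀ ω, V ω ≤ 1 := fun ω => max_le
      (Real.rpow_le_one (blockMax_nonneg B σ η X 0 (hB 0) ω)
        (blockMax_le_one B σ η X 0 hσ (hB 0) ω) (inv_pos.mpr hl1).le)
      (Real.rpow_le_one (blockMax_nonneg B σ η X 1 (hB 1) ω)
        (blockMax_le_one B σ η X 1 hσ (hB 1) ω) (inv_pos.mpr hl2).le)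
    have hVint : Integrable V ℙ :=
      (integrable_const (1:ℝ)).mono' hVmeas.aestronglyMeasurable
        (Filter.Eventually.of_forall fun ω => by
          rw [Real.norm_eq_abs, abs_of_nonneg (hV0 ω)]; exact hV1 ω)
    have hVcdf : ∀ u : ℝ, 0 < u → u < 1 → (ℙ {ω | V ω ≤ u}).toReal = u ^ L := by
      intro u hu0 hu1
      have hm : 0 < -Real.log u := by have := Real.log_neg hu0 hu1; linarith
      have hset : {ω | V ω ≤ u}
          = {ω | blockMax B σ η X 0 ω ≤ u ^ lv 0 ∧ blockMax B σ η X 1 ω ≤ u ^ lv 1} := by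
        ext ω
        simp only [Set.mem_setOf_eq, V, max_le_iff]
        rw [Real.rpow_inv_le_iff_of_pos (blockMax_nonneg B σ η X 0 (hB 0) ω) hu0.le hl1,
            Real.rpow_inv_le_iff_of_pos (blockMax_nonneg B σ η X 1 (hB 1) ω) hu0.le hl2]
        simp [lv]
      have hp := hprob (fun j => u ^ lv j) (fun j => Real.rpow_pos_of_pos hu0 _)
        (fun j => Real.rpow_lt_one hu0.le hu1 (hlv j))
      rw [hset, hp]
      have hc : (fun i => (σ i / (-Real.log (u ^ lv (B i)))) ^ η)
          = fun i => ((-Real.log u)⁻¹) ^ η * a i := by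
        funext i
        rw [Real.log_rpow hu0]
        have h2 : σ i / (-(lv (B i) * Real.log u)) = (-Real.log u)⁻¹ * (σ i / lv (B i)) := by
          have hne1 : lv (B i) ≠ 0 := (hlv (B i)).ne'
          have hne2 : -Real.log u ≠ 0 := hm.ne'
          field_simp
        rw [h2, Real.mul_rpow (inv_pos.mpr hm).le (div_pos (hσ i) (hlv (B i))).le]
      rw [hc, hjf _ (fun i => mul_pos (Real.rpow_pos_of_pos (inv_pos.mpr hm) _) (ha i)),
        hscale _ (inv_pos.mpr hm), inv_inv, Real.rpow_def_of_pos hu0]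
      congr 1
      ring
    have hsurv : ∀ t ∈ Set.Ioi (0:ℝ),
        (ℙ {ω | t < V ω}).toReal = if t < 1 then 1 - t ^ L else 0 := by
      intro t ht
      split_ifs with h
      · have hc : {ω | t < V ω} = {ω | V ω ≤ t}ᶜ := by ext ω; simp [not_le]
        have hms : MeasurableSet {ω | V ω ≤ t} := hVmeas measurableSet_Iic
        rw [hc, prob_compl_eq_one_sub hms,
          ENNReal.toReal_sub_of_le prob_le_one ENNReal.one_ne_top, ENNReal.toReal_one,
          hVcdf t ht h]
      · push_neg at h
        have he : {ω | t < V ω} = ∅ := by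
          ext ω
          simp only [Set.mem_setOf_eq, Set.mem_empty_iff_false, iff_false, not_lt]
          exact (hV1 ω).trans h
        rw [he]
        simp
    have hEV : ∫ ω, V ω ∂ℙ = L / (L + 1) := by
      rw [hVint.integral_eq_integral_meas_lt (Filter.Eventually.of_forall hV0)]
      rw [setIntegral_congr_fun measurableSet_Ioi (show Set.EqOn (fun t : ℝ => (ℙ : Measure Ω).real {a | t < V a}) (fun t : ℝ => if t < 1 then 1 - t ^ L else 0) (Set.Ioi 0) from hsurv)]
      have hind : (fun t : ℝ => if t < 1 then 1 - t ^ L else 0)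
          = Set.indicator (Set.Iio 1) (fun t => 1 - t ^ L) := by
        funext t; rw [Set.indicator_apply]; simp [Set.mem_Iio]
      rw [hind, setIntegral_indicator measurableSet_Iio]
      have hii : Set.Ioi (0:ℝ) ∩ Set.Iio 1 = Set.Ioo 0 1 := by ext x; simp [Set.mem_Ioo]
      rw [hii, ← MeasureTheory.integral_Ioc_eq_integral_Ioo,
        ← intervalIntegral.integral_of_le zero_le_one]
      rw [intervalIntegral.integral_sub intervalIntegrable_const
        (intervalIntegral.intervalIntegrable_rpow (Or.inl hL0.le))]
      rw [integral_rpow (Or.inl (by linarith : (-1:ℝ) < L))]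
      have hL1 : L + 1 ≠ 0 := by linarith
      rw [Real.one_rpow, Real.zero_rpow hL1]
      simp
      field_simp
      ring
    simp only [epsFun]
    rw [hVsup, hEV]
    have hL1 : L + 1 ≠ 0 := by linarith
    have h1 : (1:ℝ) - L / (L + 1) = 1 / (L + 1) := by field_simp; ring
    rw [h1]
    field_simp
  rw [heps]
  -- limit part
  have hinv : Tendsto (fun t : ℝ => t⁻¹) atTop (𝓝[≠] (0:ℝ)) := by
    apply tendsto_nhdsWithin_of_tendsto_nhds_of_eventually_within _ tendsto_inv_atTop_zero
    filter_upwards [eventually_gt_atTop 0] with t ht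
    exact inv_ne_zero ht.ne'
  -- limit of the lower bound function
  have hGlim : Tendsto (fun t : ℝ => t * (1 - Real.exp (-(L / t)))) atTop (𝓝 L) := by
    have hderiv : HasDerivAt (fun s : ℝ => 1 - Real.exp (-(L * s))) L 0 := by
      have h1 : HasDerivAt (fun s : ℝ => L * s) L 0 := by
        simpa using (hasDerivAt_id (0:ℝ)).const_mul L
      have h3 := (h1.neg.exp).const_sub 1
      simpa using h3
    rw [hasDerivAt_iff_tendsto_slope] at hderiv
    have hcomp := hderiv.comp hinv
    apply hcomp.congr'
    filter_upwards [eventually_gt_atTop 0] with t ht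
    simp only [Function.comp_apply]
    rw [slope_def_field]
    rw [show L / t = L * t⁻¹ by rw [div_eq_mul_inv]]
    have ht' : t ≠ 0 := ht.ne'
    field_simp
    simp only [mul_zero, neg_zero, Real.exp_zero]; ring
  -- limit of t * (-log (1 - lv j / t)) is lv j
  have htm : ∀ j : Fin 2,
      Tendsto (fun t : ℝ => t * (-Real.log (1 - lv j / t))) atTop (𝓝 (lv j)) := by
    intro j
    have hderiv : HasDerivAt (fun s : ℝ => -Real.log (1 - lv j * s)) (lv j) 0 := by
      have h1 : HasDerivAt (fun s : ℝ => 1 - lv j * s) (-(lv j)) 0 := by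
        simpa using ((hasDerivAt_id (0:ℝ)).const_mul (lv j)).const_sub 1
      have h2 := (h1.log (by norm_num)).neg
      simpa [Pi.neg_def] using h2
    rw [hasDerivAt_iff_tendsto_slope] at hderiv
    have hcomp := hderiv.comp hinv
    apply hcomp.congr'
    filter_upwards [eventually_gt_atTop 0] with t ht
    simp only [Function.comp_apply]
    rw [slope_def_field]
    rw [show lv j / t = lv j * t⁻¹ by rw [div_eq_mul_inv]]
    have ht' : t ≠ 0 := ht.ne'
    field_simp
    simp only [mul_zero, sub_zero, Real.log_one]; ring
  -- limit of rho
  have hρlim : Tendsto (fun t : ℝ => min (lv 0 / (t * (-Real.log (1 - lv 0 / t))))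
      (lv 1 / (t * (-Real.log (1 - lv 1 / t))))) atTop (𝓝 1) := by
    have h0 : Tendsto (fun t : ℝ => lv 0 / (t * (-Real.log (1 - lv 0 / t)))) atTop (𝓝 1) := by
      have := (tendsto_const_nhds : Tendsto (fun _ : ℝ => lv 0) atTop (𝓝 (lv 0))).div
        (htm 0) (hlv 0).ne'
      simpa [Pi.div_def, div_self (hlv 0).ne'] using this
    have h1 : Tendsto (fun t : ℝ => lv 1 / (t * (-Real.log (1 - lv 1 / t)))) atTop (𝓝 1) := by
      have := (tendsto_const_nhds : Tendsto (fun _ : ℝ => lv 1) atTop (𝓝 (lv 1))).div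
        (htm 1) (hlv 1).ne'
      simpa [Pi.div_def, div_self (hlv 1).ne'] using this
    have := h0.min h1
    simpa using this
  have hH : Tendsto (fun t : ℝ => L / min (lv 0 / (t * (-Real.log (1 - lv 0 / t))))
      (lv 1 / (t * (-Real.log (1 - lv 1 / t))))) atTop (𝓝 L) := by
    have := (tendsto_const_nhds : Tendsto (fun _ : ℝ => L) atTop (𝓝 L)).div
      hρlim one_ne_zero
    simpa [Pi.div_def] using this
  -- squeeze
  have hboth : ∀ᶠ t in atTop,
      t * (1 - Real.exp (-(L / t))) ≤ t * (1 - (ℙ {ω | blockMax B σ η X 0 ω ≤ 1 - l1 / t ∧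
          blockMax B σ η X 1 ω ≤ 1 - l2 / t}).toReal) ∧
      t * (1 - (ℙ {ω | blockMax B σ η X 0 ω ≤ 1 - l1 / t ∧
          blockMax B σ η X 1 ω ≤ 1 - l2 / t}).toReal)
        ≤ L / min (lv 0 / (t * (-Real.log (1 - lv 0 / t))))
            (lv 1 / (t * (-Real.log (1 - lv 1 / t)))) := by
    filter_upwards [eventually_gt_atTop (max l1 l2), eventually_gt_atTop 0] with t htl ht0
    have h1t : lv 0 < t := lt_of_le_of_lt (by simp [lv]) htl
    have h2t : lv 1 < t := lt_of_le_of_lt (by simp [lv]) htl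
    have htlv : ∀ j, lv j < t := by
      intro j; rcases fin2_cases j with h | h <;> subst h <;> assumption
    have hu0 : ∀ j, 0 < 1 - lv j / t := by
      intro j
      have : lv j / t < 1 := (div_lt_one ht0).mpr (htlv j)
      linarith
    have hu1 : ∀ j, 1 - lv j / t < 1 := fun j => sub_lt_self _ (div_pos (hlv j) ht0)
    have hmp : ∀ j, 0 < -Real.log (1 - lv j / t) := by
      intro j
      have := Real.log_neg (hu0 j) (hu1 j)
      linarith
    have hmlb : ∀ j, lv j / t ≤ -Real.log (1 - lv j / t) := by
      intro j
      have := Real.log_le_sub_one_of_pos (hu0 j)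
      linarith
    have hρpos : 0 < min (lv 0 / (t * (-Real.log (1 - lv 0 / t))))
        (lv 1 / (t * (-Real.log (1 - lv 1 / t)))) :=
      lt_min (div_pos (hlv 0) (mul_pos ht0 (hmp 0))) (div_pos (hlv 1) (mul_pos ht0 (hmp 1)))
    set ρt := min (lv 0 / (t * (-Real.log (1 - lv 0 / t))))
        (lv 1 / (t * (-Real.log (1 - lv 1 / t)))) with hρt_def
    have hρle : ∀ j, ρt ≤ lv j / (t * (-Real.log (1 - lv j / t))) := by
      intro j
      rcases fin2_cases j with h | h <;> subst h
      · exact min_le_left _ _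
      · exact min_le_right _ _
    have hmub : ∀ j, -Real.log (1 - lv j / t) ≤ lv j / (t * ρt) := by
      intro j
      have h1 := (le_div_iff₀ (mul_pos ht0 (hmp j))).mp (hρle j)
      rw [le_div_iff₀ (mul_pos ht0 hρpos)]
      nlinarith
    -- positivity of the transformed vector
    have hcpos : ∀ i, 0 < (σ i / (-Real.log (1 - lv (B i) / t))) ^ η :=
      fun i => Real.rpow_pos_of_pos (div_pos (hσ i) (hmp (B i))) _
    -- probability formula at t
    have hu := hprob (fun j => 1 - lv j / t) hu0 hu1
    have hform : {ω | blockMax B σ η X 0 ω ≤ 1 - l1 / t ∧ blockMax B σ η X 1 ω ≤ 1 - l2 / t}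
        = {ω | blockMax B σ η X 0 ω ≤ (fun j => 1 - lv j / t) 0 ∧
               blockMax B σ η X 1 ω ≤ (fun j => 1 - lv j / t) 1} := by
      simp [lv]
    have hPt : (ℙ {ω | blockMax B σ η X 0 ω ≤ 1 - l1 / t ∧
          blockMax B σ η X 1 ω ≤ 1 - l2 / t}).toReal
        = Real.exp (-(expo X (fun i => (σ i / (-Real.log (1 - lv (B i) / t))) ^ η))) := by
      rw [hform, hu]
      exact hjf _ hcpos
    set xt := expo X (fun i => (σ i / (-Real.log (1 - lv (B i) / t))) ^ η) with hxt_def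
    -- sandwich on xt
    have hx_lb : t⁻¹ * L ≤ xt := by
      have hub : ∀ i, (σ i / (-Real.log (1 - lv (B i) / t))) ^ η ≤ t ^ η * a i := by
        intro i
        have h1 : σ i / (-Real.log (1 - lv (B i) / t)) ≤ σ i / (lv (B i) / t) :=
          div_le_div_of_nonneg_left (hσ i).le (div_pos (hlv (B i)) ht0) (hmlb (B i))
        have h2 : σ i / (lv (B i) / t) = t * (σ i / lv (B i)) := by
          field_simp
        have h3 := Real.rpow_le_rpow (div_pos (hσ i) (hmp (B i))).le (h1.trans_eq h2) hη0.le
        rwa [Real.mul_rpow ht0.le (div_pos (hσ i) (hlv (B i))).le] at h3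
      have := hmono _ (fun i => t ^ η * a i) hcpos hub
      rwa [hscale t ht0] at this
    have hx_ub : xt ≤ (t * ρt)⁻¹ * L := by
      have hlb : ∀ i, (t * ρt) ^ η * a i ≤ (σ i / (-Real.log (1 - lv (B i) / t))) ^ η := by
        intro i
        have h1 : σ i / (lv (B i) / (t * ρt)) ≤ σ i / (-Real.log (1 - lv (B i) / t)) :=
          div_le_div_of_nonneg_left (hσ i).le (hmp (B i)) (hmub (B i))
        have h2 : σ i / (lv (B i) / (t * ρt)) = (t * ρt) * (σ i / lv (B i)) := by
          field_simp
        have h3 := Real.rpow_le_rpow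
          ((mul_pos (mul_pos ht0 hρpos) (div_pos (hσ i) (hlv (B i)))).le) (h2 ▸ h1) hη0.le
        rwa [Real.mul_rpow (mul_pos ht0 hρpos).le (div_pos (hσ i) (hlv (B i))).le] at h3
      have := hmono (fun i => (t * ρt) ^ η * a i) _
        (fun i => mul_pos (Real.rpow_pos_of_pos (mul_pos ht0 hρpos) _) (ha i)) hlb
      rwa [hscale (t * ρt) (mul_pos ht0 hρpos)] at this
    rw [hPt]
    constructor
    · -- lower bound goal : t * (1 - exp (-(L/t))) ≤ t * (1 - exp (-xt))
      have hLt : L / t ≤ xt := by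
        rw [div_eq_mul_inv, mul_comm]
        exact hx_lb
      have hexp : Real.exp (-xt) ≤ Real.exp (-(L / t)) :=
        Real.exp_le_exp.mpr (neg_le_neg hLt)
      have hsub : 1 - Real.exp (-(L / t)) ≤ 1 - Real.exp (-xt) := by linarith
      exact mul_le_mul_of_nonneg_left hsub ht0.le
    · -- upper bound goal : t * (1 - exp (-xt)) ≤ L / ρt
      have hexp : 1 - Real.exp (-xt) ≤ xt := by
        have := Real.add_one_le_exp (-xt)
        linarith
      have h1 : t * (1 - Real.exp (-xt)) ≤ t * xt :=
        mul_le_mul_of_nonneg_left hexp ht0.le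
      have h2 : t * xt ≤ t * ((t * ρt)⁻¹ * L) :=
        mul_le_mul_of_nonneg_left hx_ub ht0.le
      have h3 : t * ((t * ρt)⁻¹ * L) = L / ρt := by
        field_simp
      linarith
  exact tendsto_of_tendsto_of_tendsto_of_le_of_le' hGlim hH
    (hboth.mono fun t h => h.1) (hboth.mono fun t h => h.2)
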